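/- Let M_ℝ = ⊕_{i∈I} ⊕_{1≤k≤d_i} ℝ·e_{ik} with the standard pairing against the dual lattice, and suppose B ⊂ M_ℝ is a finite set of vectors each of which is of the form ±e_{ik} or e_{ik} − e_{i'k'}. Let χ_0 = Σ_{i,k} e_{ik}. Then for every proper linear subspace H ⊊ M_ℝ there exists a cocharacter λ (an integer vector (λ_{ik})) such that ⟨λ, β⟩ = 0 for all β ∈ B ∩ H and ⟨λ, χ_0⟩ > 0. -/
import Mathlib


open scoped BigOperators

/-- In `M_ℝ = ⊕ ℝ·e_i` with standard pairing, if every element of the finite set `B`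
is of the form `±e_i` or `e_i − e_j`, and `χ₀ = Σ e_i`, then for every proper linear
subspace `H ⊊ M_ℝ` there is an integral cocharacter `λ` with `⟨λ, β⟩ = 0` for all
`β ∈ B ∩ H` and `⟨λ, χ₀⟩ > 0`. -/
theorem exists_cocharacter_generic {ι : Type*} [Fintype ι] [DecidableEq ι]
    (B : Finset (ι → ℝ))
    (hB : ∀ β ∈ B, (∃ i, β = Pi.single i 1 ∨ β = -Pi.single i 1) ∨
      ∃ i j, β = Pi.single i 1 - Pi.single j 1)
    (H : Submodule ℝ (ι → ℝ)) (hH : H ≠ ⊤) :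
    ∃ lam : ι → ℤ,
      (∀ β ∈ B, β ∈ H → ∑ i, (lam i : ℝ) * β i = 0) ∧
      0 < ∑ i, (lam i : ℝ) := by
  classical
  -- some basis vector is not in H
  have hex : ∃ i, Pi.single i (1:ℝ) ∉ H := by
    by_contra h
    push_neg at h
    apply hH
    rw [eq_top_iff]
    intro x _
    have : x = ∑ i, x i • (Pi.single i 1 : ι → ℝ) := by
      ext j; simp [Pi.single_apply, Finset.sum_ite_eq']
    rw [this]
    exact Submodule.sum_mem _ fun i _ => Submodule.smul_mem _ _ (h i)
  refine ⟨fun i => if Pi.single i (1:ℝ) ∈ H then 0 else 1, ?_, ?_⟩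
  · intro β hβ hβH
    have key : ∀ i, ∑ k, (((if Pi.single k (1:ℝ) ∈ H then (0:ℤ) else 1) : ℤ) : ℝ) * (Pi.single i 1 : ι → ℝ) k
        = (if Pi.single i (1:ℝ) ∈ H then (0:ℝ) else 1) := by
      intro i
      rw [Finset.sum_eq_single i]
      · simp
      · intro k _ hk; simp [Pi.single_apply, hk]
      · simp
    rcases hB β hβ with ⟨i, hi | hi⟩ | ⟨i, j, hij⟩
    · subst hi
      rw [key i, if_pos hβH]
    · have hmem : Pi.single i (1:ℝ) ∈ H := by
        have := H.neg_mem hβH; rwa [hi, neg_neg] at this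
      subst hi
      simp only [Pi.neg_apply, mul_neg, Finset.sum_neg_distrib]
      rw [key i, if_pos hmem, neg_zero]
    · subst hij
      simp only [Pi.sub_apply, mul_sub, Finset.sum_sub_distrib]
      rw [key i, key j]
      by_cases hi : Pi.single i (1:ℝ) ∈ H
      · have hj : Pi.single j (1:ℝ) ∈ H := by
          have := H.sub_mem hi hβH
          simpa using this
        simp [hi, hj]
      · have hj : Pi.single j (1:ℝ) ∉ H := by
          intro hj
          exact hi (by simpa using H.add_mem hβH hj)
        simp [hi, hj]
  · obtain ⟨i, hi⟩ := hex
    apply Finset.sum_pos'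
    · intro k _; positivity
    · exact ⟨i, Finset.mem_univ i, by simp [hi]⟩
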